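/- Let G be a finite group acting faithfully on a field L by automorphisms, and suppose G acts on the rational function field L(x) in one variable by automorphisms satisfying σ(L) ⊆ L and σ(x) = a_σ·x + b_σ with a_σ, b_σ ∈ L and a_σ ≠ 0 for all σ ∈ G. Then the fixed field L(x)^G equals L^G(f) for some polynomial f ∈ L[x]; in fact any G-invariant polynomial f of minimal positive degree among G-invariant polynomials not lying in L^G satisfies L(x)^G = L^G(f). -/

import Mathlib

private def fixedSubfield15 {K : Type*} [Field K] (σ : K ≃+* K) : Subfield K where
  carrier := {z | σ z = z}
  mul_mem' := by intro a b ha hb; simp only [Set.mem_setOf_eq] at *; rw [map_mul, ha, hb]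
  one_mem' := map_one σ
  add_mem' := by intro a b ha hb; simp only [Set.mem_setOf_eq] at *; rw [map_add, ha, hb]
  zero_mem' := map_zero σ
  neg_mem' := by intro a ha; simp only [Set.mem_setOf_eq] at *; rw [map_neg, ha]
  inv_mem' := by intro a ha; simp only [Set.mem_setOf_eq] at *; rw [map_inv₀, ha]

private lemma mem_of_coeff15 {L : Type*} [Field L] (K : Subfield (RatFunc L))
    (hX : RatFunc.X ∈ K) (p : Polynomial L) (hc : ∀ i, RatFunc.C (p.coeff i) ∈ K) :
    algebraMap (Polynomial L) (RatFunc L) p ∈ K := by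
  have h : algebraMap (Polynomial L) (RatFunc L)
      = Polynomial.eval₂RingHom RatFunc.C RatFunc.X := by
    apply Polynomial.ringHom_ext
    · intro a; simp [RatFunc.algebraMap_C]
    · simp [RatFunc.algebraMap_X]
  rw [h, Polynomial.coe_eval₂RingHom, Polynomial.eval₂_eq_sum, Polynomial.sum_def]
  exact Subfield.sum_mem K fun i _ => mul_mem (hc i) (pow_mem hX i)

private lemma map_fix15 {L : Type*} [Field L] (E : L →+* L) (w : RatFunc L) (hw0 : w ≠ 0)
    (heq : algebraMap (Polynomial L) (RatFunc L) (w.num.map E)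
        / algebraMap (Polynomial L) (RatFunc L) (w.denom.map E)
      = algebraMap (Polynomial L) (RatFunc L) w.num
        / algebraMap (Polynomial L) (RatFunc L) w.denom) :
    w.num.map E = w.num ∧ w.denom.map E = w.denom := by
  set n := w.num with hn
  set d := w.denom with hd
  have hn0 : n ≠ 0 := RatFunc.num_ne_zero hw0
  have hd0 : d ≠ 0 := RatFunc.denom_ne_zero w
  have hdm0 : d.map E ≠ 0 := (Polynomial.map_ne_zero_iff E.injective).mpr hd0
  have hnm0 : n.map E ≠ 0 := (Polynomial.map_ne_zero_iff E.injective).mpr hn0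
  have cross := (div_eq_div_iff (RatFunc.algebraMap_ne_zero hdm0)
      (RatFunc.algebraMap_ne_zero hd0)).mp heq
  have poly_eq : n.map E * d = n * d.map E := by
    apply RatFunc.algebraMap_injective L
    rw [map_mul, map_mul]; exact cross
  have cop : IsCoprime n d := RatFunc.isCoprime_num_denom w
  have cop' : IsCoprime (n.map E) (d.map E) := by
    have := cop.map (Polynomial.mapRingHom E)
    simpa using this
  have d1 : n ∣ n.map E := cop.dvd_of_dvd_mul_right ⟨d.map E, poly_eq⟩
  have d2 : n.map E ∣ n := cop'.dvd_of_dvd_mul_right ⟨d, poly_eq.symm⟩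
  obtain ⟨v, hv⟩ := associated_of_dvd_dvd d2 d1
  obtain ⟨r, hr_unit, hrC⟩ := Polynomial.isUnit_iff.mp v.isUnit
  have hnr : n = n.map E * Polynomial.C r := by rw [hrC, hv]
  have hdr : d = Polynomial.C r * d.map E := by
    apply mul_left_cancel₀ hnm0
    calc n.map E * d = n * d.map E := poly_eq
      _ = (n.map E * Polynomial.C r) * d.map E := congrArg (· * d.map E) hnr
      _ = n.map E * (Polynomial.C r * d.map E) := by ring
  have hr1 : r = 1 := by
    have h1 : d.leadingCoeff = 1 := RatFunc.monic_denom w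
    have h2 : (d.map E).leadingCoeff = 1 := (RatFunc.monic_denom w).map E
    rw [hdr, Polynomial.leadingCoeff_mul, Polynomial.leadingCoeff_C, h2, mul_one] at h1
    exact h1
  rw [hr1, Polynomial.C_1, mul_one] at hnr
  rw [hr1, Polynomial.C_1, one_mul] at hdr
  exact ⟨hnr.symm, hdr.symm⟩

set_option maxHeartbeats 1000000 in
theorem stmt_15 (L : Type*) [Field L] (G : Type*) [Group G] [Finite G]
    (ρ : G →* (RatFunc L ≃+* RatFunc L))
    -- each σ ∈ G maps L into L
    (hL : ∀ (g : G) (c : L), ∃ c' : L, ρ g (RatFunc.C c) = RatFunc.C c')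
    -- the action of G on L is faithful
    (hfaith : ∀ g : G, (∀ c : L, ρ g (RatFunc.C c) = RatFunc.C c) → g = 1)
    -- σ(x) = a_σ x + b_σ with a_σ ≠ 0
    (haff : ∀ g : G, ∃ a b : L, a ≠ 0 ∧
      ρ g RatFunc.X = RatFunc.C a * RatFunc.X + RatFunc.C b)
    -- f is a G-invariant polynomial of minimal degree among the
    -- G-invariant polynomials not lying in L^G
    (f : Polynomial L)
    (hfinv : ∀ g : G, ρ g (algebraMap (Polynomial L) (RatFunc L) f)
      = algebraMap (Polynomial L) (RatFunc L) f)
    (hfdeg : 0 < f.natDegree)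
    (hfmin : ∀ h : Polynomial L,
      (∀ g : G, ρ g (algebraMap (Polynomial L) (RatFunc L) h)
        = algebraMap (Polynomial L) (RatFunc L) h) →
      0 < h.natDegree → f.natDegree ≤ h.natDegree) :
    -- then L(x)^G = L^G(f)
    ∀ z : RatFunc L, (∀ g : G, ρ g z = z) ↔
      z ∈ Subfield.closure
        ({w | ∃ c : L, w = RatFunc.C c ∧ ∀ g : G, ρ g (RatFunc.C c) = RatFunc.C c}
          ∪ {algebraMap (Polynomial L) (RatFunc L) f}) := by
  have : Fintype G := Fintype.ofFinite G
  classical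
  have Cinj : Function.Injective (RatFunc.C (K := L)) := RingHom.injective (RatFunc.C (K := L))
  have hmulρ : ∀ (g h : G) (z : RatFunc L), ρ (g * h) z = ρ g (ρ h z) := by
    intro g h z; rw [map_mul]; rfl
  -- the action on L as ring homs
  have keyE : ∀ g : G, ∃ E : L →+* L, ∀ c, ρ g (RatFunc.C c) = RatFunc.C (E c) := by
    intro g
    refine ⟨{ toFun := fun c => (hL g c).choose
              map_one' := ?_, map_mul' := ?_, map_zero' := ?_, map_add' := ?_ },
            fun c => (hL g c).choose_spec⟩
    · apply Cinj; rw [← (hL g 1).choose_spec, map_one, map_one]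
    · intro x y; apply Cinj
      rw [← (hL g _).choose_spec, map_mul, map_mul, map_mul]
      exact congrArg₂ (· * ·) (hL g x).choose_spec (hL g y).choose_spec
    · apply Cinj; rw [← (hL g 0).choose_spec, map_zero, map_zero]
    · intro x y; apply Cinj
      rw [← (hL g _).choose_spec, map_add, map_add, map_add]
      exact congrArg₂ (· + ·) (hL g x).choose_spec (hL g y).choose_spec
  choose Eg hEg using keyE
  have hEg_inj : Function.Injective Eg := by
    intro g g' hgg'
    have : ∀ c : L, ρ (g'⁻¹ * g) (RatFunc.C c) = RatFunc.C c := by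
      intro c
      rw [hmulρ, hEg, hgg', ← hEg, ← hmulρ, inv_mul_cancel, map_one]; rfl
    have h1 := hfaith _ this
    rwa [inv_mul_eq_one, eq_comm] at h1
  -- affine data
  choose aσ bσ haσ hab using haff
  -- Dedekind independence: find u with nonzero leading coefficient of the trace
  obtain ⟨u, hu⟩ : ∃ u : L, (∑ g : G, aσ g * Eg g u) ≠ 0 := by
    by_contra hA
    push_neg at hA
    have hindep : LinearIndependent L (fun g : G => ((Eg g).toMonoidHom : L → L)) := by
      apply (linearIndependent_monoidHom L L).comp
      intro g g' h
      apply hEg_inj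
      ext c
      exact congrFun (congrArg (fun (F : L →* L) => (F : L → L)) h) c
    have := Fintype.linearIndependent_iff.mp hindep aσ ?_ (1 : G)
    · exact haσ 1 this
    · funext c
      simpa [Finset.sum_apply] using hA c
  -- an invariant polynomial of degree 1
  obtain ⟨hp, hpdeg, hpinv⟩ : ∃ hp : Polynomial L, hp.natDegree = 1 ∧
      (∀ g : G, ρ g (algebraMap (Polynomial L) (RatFunc L) hp)
        = algebraMap (Polynomial L) (RatFunc L) hp) := by
    refine ⟨Polynomial.C (∑ g : G, aσ g * Eg g u) * Polynomial.X
      + Polynomial.C (∑ g : G, bσ g * Eg g u), Polynomial.natDegree_linear hu, ?_⟩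
    have hterm : ∀ g : G, ρ g (RatFunc.C u * RatFunc.X)
        = RatFunc.C (aσ g * Eg g u) * RatFunc.X + RatFunc.C (bσ g * Eg g u) := by
      intro g
      rw [map_mul, hEg, hab, map_mul, map_mul]
      ring
    have hSU : algebraMap (Polynomial L) (RatFunc L)
        (Polynomial.C (∑ g : G, aσ g * Eg g u) * Polynomial.X
          + Polynomial.C (∑ g : G, bσ g * Eg g u))
        = ∑ g : G, ρ g (RatFunc.C u * RatFunc.X) := by
      rw [map_add, map_mul, RatFunc.algebraMap_C, RatFunc.algebraMap_C, RatFunc.algebraMap_X]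
      rw [Finset.sum_congr rfl (fun g _ => hterm g), Finset.sum_add_distrib, ← Finset.sum_mul,
        ← map_sum, ← map_sum]
    intro g
    rw [hSU, map_sum]
    have hstep : ∀ h : G, ρ g (ρ h (RatFunc.C u * RatFunc.X))
        = ρ (g * h) (RatFunc.C u * RatFunc.X) := fun h => (hmulρ g h _).symm
    rw [Finset.sum_congr rfl (fun h _ => hstep h)]
    exact Fintype.sum_equiv (Equiv.mulLeft g) _ _ (fun h => rfl)
  -- f has degree 1
  have hdeg1 : f.natDegree = 1 :=
    le_antisymm (by simpa [hpdeg] using hfmin hp hpinv (by rw [hpdeg]; norm_num)) hfdeg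
  -- the substitution homomorphism φ : X ↦ f
  have hfC : ∀ c : L, f ≠ Polynomial.C c := by
    intro c hc
    rw [hc, Polynomial.natDegree_C] at hdeg1; exact one_ne_zero hdeg1.symm
  set g₀ : Polynomial L →+* RatFunc L :=
    (algebraMap (Polynomial L) (RatFunc L)).comp (Polynomial.eval₂RingHom Polynomial.C f)
    with hg₀
  have hg₀_apply : ∀ p : Polynomial L,
      g₀ p = algebraMap (Polynomial L) (RatFunc L) (p.comp f) := by
    intro p; simp [hg₀, Polynomial.comp]
  have hg₀_inj : Function.Injective g₀ := by
    intro p q hpq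
    rw [hg₀_apply, hg₀_apply] at hpq
    have h2 : p.comp f = q.comp f := RatFunc.algebraMap_injective L hpq
    have h3 : (p - q).comp f = 0 := by rw [Polynomial.sub_comp, h2, sub_self]
    rcases Polynomial.comp_eq_zero_iff.mp h3 with h | h
    · exact sub_eq_zero.mp h
    · exact absurd h.2 (hfC _)
  set φ : RatFunc L →+* RatFunc L := IsFractionRing.lift hg₀_inj with hφdef
  have hφ : ∀ p : Polynomial L, φ (algebraMap (Polynomial L) (RatFunc L) p)
      = algebraMap (Polynomial L) (RatFunc L) (p.comp f) := by
    intro p; rw [hφdef, IsFractionRing.lift_algebraMap, hg₀_apply]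
  have hφsurj : Function.Surjective φ := by
    set a1 := f.coeff 1 with ha1def
    set a0 := f.coeff 0 with ha0def
    have ha₁ : a1 ≠ 0 := by
      have : a1 = f.leadingCoeff := by rw [Polynomial.leadingCoeff, hdeg1]
      rw [this]
      exact Polynomial.leadingCoeff_ne_zero.mpr (fun h => by simp [h] at hdeg1)
    have hf : f = Polynomial.C a1 * Polynomial.X + Polynomial.C a0 :=
      Polynomial.eq_X_add_C_of_natDegree_le_one hdeg1.le
    set lin' : Polynomial L := Polynomial.C a1⁻¹ * Polynomial.X
        - Polynomial.C (a1⁻¹ * a0) with hlin'def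
    have hlin' : lin'.comp f = Polynomial.X := by
      rw [hlin'def, hf, Polynomial.sub_comp, Polynomial.mul_comp, Polynomial.C_comp,
        Polynomial.C_comp, Polynomial.X_comp, mul_add, ← mul_assoc, ← Polynomial.C_mul,
        inv_mul_cancel₀ ha₁, Polynomial.C_1, one_mul, ← Polynomial.C_mul,
        add_sub_cancel_right]
    intro z
    refine ⟨algebraMap _ _ (z.num.comp lin') / algebraMap _ _ (z.denom.comp lin'), ?_⟩
    rw [map_div₀, hφ, hφ]
    simp only [Polynomial.comp_assoc, hlin', Polynomial.comp_X]
    exact RatFunc.num_div_denom z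
  have hφC : ∀ c : L, φ (RatFunc.C c) = RatFunc.C c := by
    intro c
    rw [← RatFunc.algebraMap_C, hφ, Polynomial.C_comp]
  have hφX : φ RatFunc.X = algebraMap (Polynomial L) (RatFunc L) f := by
    rw [← RatFunc.algebraMap_X, hφ, Polynomial.X_comp]
  -- the coefficientwise action ψ
  have keyψ : ∀ g : G, ∃ ψ : RatFunc L →+* RatFunc L, ∀ p : Polynomial L,
      ψ (algebraMap (Polynomial L) (RatFunc L) p)
        = algebraMap (Polynomial L) (RatFunc L) (p.map (Eg g)) := by
    intro g
    have hinj : Function.Injective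
        ((algebraMap (Polynomial L) (RatFunc L)).comp (Polynomial.mapRingHom (Eg g))) := by
      apply (RatFunc.algebraMap_injective L).comp
      simpa using Polynomial.map_injective (Eg g) (Eg g).injective
    refine ⟨IsFractionRing.lift hinj, fun p => ?_⟩
    rw [IsFractionRing.lift_algebraMap]
    simp
  choose ψ hψ using keyψ
  -- the conjugation identity
  have htoRing : ∀ (g : G) (x : RatFunc L), (ρ g).toRingHom x = ρ g x := fun _ _ => rfl
  have hconj : ∀ g : G,
      ((ρ g).toRingHom).comp φ = φ.comp (ψ g) := by
    intro g
    apply IsLocalization.ringHom_ext (nonZeroDivisors (Polynomial L))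
    apply Polynomial.ringHom_ext
    · intro a
      simp only [RingHom.comp_apply, RatFunc.algebraMap_C]
      conv_rhs => rw [← RatFunc.algebraMap_C (K := L) a, hψ, Polynomial.map_C,
        RatFunc.algebraMap_C, hφC]
      rw [hφC, htoRing, hEg]
    · simp only [RingHom.comp_apply, RatFunc.algebraMap_X]
      conv_rhs => rw [← RatFunc.algebraMap_X (K := L), hψ, Polynomial.map_X,
        RatFunc.algebraMap_X, hφX]
      rw [hφX, htoRing, hfinv]
  intro z
  constructor
  · -- invariant implies in the closure
    intro hz
    obtain ⟨w, hw⟩ := hφsurj z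
    have hψw : ∀ g : G, ψ g w = w := by
      intro g
      apply φ.injective
      have h1 : φ (ψ g w) = ρ g (φ w) := by
        have := RingHom.congr_fun (hconj g) w
        simpa using this.symm
      rw [h1, hw]
      exact hz g
    by_cases hw0 : w = 0
    · rw [← hw, hw0, map_zero]
      exact zero_mem _
    · have key : ∀ g : G, w.num.map (Eg g) = w.num ∧ w.denom.map (Eg g) = w.denom := by
        intro g
        apply map_fix15 (Eg g) w hw0
        calc algebraMap (Polynomial L) (RatFunc L) (w.num.map (Eg g))
              / algebraMap (Polynomial L) (RatFunc L) (w.denom.map (Eg g))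
            = ψ g (algebraMap (Polynomial L) (RatFunc L) w.num)
              / ψ g (algebraMap (Polynomial L) (RatFunc L) w.denom) := by rw [hψ, hψ]
          _ = ψ g (algebraMap (Polynomial L) (RatFunc L) w.num
              / algebraMap (Polynomial L) (RatFunc L) w.denom) := (map_div₀ (ψ g) _ _).symm
          _ = ψ g w := by rw [RatFunc.num_div_denom]
          _ = w := hψw g
          _ = algebraMap (Polynomial L) (RatFunc L) w.num
              / algebraMap (Polynomial L) (RatFunc L) w.denom :=
              (RatFunc.num_div_denom w).symm
      set S : Set (RatFunc L) :=
        ({w | ∃ c : L, w = RatFunc.C c ∧ ∀ g : G, ρ g (RatFunc.C c) = RatFunc.C c}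
          ∪ {algebraMap (Polynomial L) (RatFunc L) f}) with hS
      set K : Subfield (RatFunc L) := Subfield.comap φ (Subfield.closure S) with hK
      have hXK : RatFunc.X ∈ K := by
        rw [hK, Subfield.mem_comap, hφX]
        exact Subfield.subset_closure (Or.inr rfl)
      have hCK : ∀ c : L, (∀ g : G, ρ g (RatFunc.C c) = RatFunc.C c) → RatFunc.C c ∈ K := by
        intro c hc
        rw [hK, Subfield.mem_comap, hφC]
        exact Subfield.subset_closure (Or.inl ⟨c, rfl, hc⟩)
      have hfixcoeff : ∀ (p : Polynomial L), (∀ g : G, p.map (Eg g) = p) →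
          ∀ i, ∀ g : G, ρ g (RatFunc.C (p.coeff i)) = RatFunc.C (p.coeff i) := by
        intro p hpfix i g
        have : (p.map (Eg g)).coeff i = p.coeff i := by rw [hpfix g]
        rw [Polynomial.coeff_map] at this
        rw [hEg, this]
      have hnum : algebraMap (Polynomial L) (RatFunc L) w.num ∈ K :=
        mem_of_coeff15 K hXK _ (fun i => hCK _ (hfixcoeff w.num (fun g => (key g).1) i))
      have hden : algebraMap (Polynomial L) (RatFunc L) w.denom ∈ K :=
        mem_of_coeff15 K hXK _ (fun i => hCK _ (hfixcoeff w.denom (fun g => (key g).2) i))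
      have hwK : w ∈ K := by
        rw [← RatFunc.num_div_denom w]
        exact div_mem hnum hden
      rw [hK, Subfield.mem_comap] at hwK
      rwa [hw] at hwK
  · -- closure is contained in the fixed field
    intro hz g
    have hsub : ({w | ∃ c : L, w = RatFunc.C c ∧ ∀ g : G, ρ g (RatFunc.C c) = RatFunc.C c}
          ∪ {algebraMap (Polynomial L) (RatFunc L) f} : Set (RatFunc L))
        ⊆ (fixedSubfield15 (ρ g) : Set (RatFunc L)) := by
      rintro w (⟨c, rfl, hc⟩ | rfl)
      · exact hc g
      · exact hfinv g
    exact Subfield.closure_le.mpr hsub hz
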